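/- (Contact in the wiggly-dissipation cell problem forces the averaged kinetic relation.) Let μ : ℝ → ℝ be continuous, 1-periodic, with 0 < m ≤ μ(y) for all y, and set μ̄ := ∫₀¹ μ(y) dy. Let v ≠ 0 and ξ ∈ ℝ, and suppose z : [0,1] → ℝ is continuously differentiable with z(1) = z(0) + sign(v) and ∫₀¹ [ μ(z(s)) (v z′(s))² / 2 + ξ² / (2 μ(z(s))) ] ds = ξ v. Then ξ = μ̄ v. -/

import Mathlib

open MeasureTheory intervalIntegral

/-- **Contact in the wiggly-dissipation cell problem forces the averaged
kinetic relation.** For `μ` continuous, 1-periodic and bounded below by `m > 0`, with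
mean `μ̄ = ∫₀¹ μ`, if `v ≠ 0`, `ξ ∈ ℝ` and some `C¹` curve `z : [0,1] → ℝ` with
`z(1) = z(0) + sign v` achieves `∫₀¹ [μ(z)(v z′)²/2 + ξ²/(2μ(z))] ds = ξ v`,
then `ξ = μ̄ v`. -/
theorem statement10 (μ : ℝ → ℝ) (hμcont : Continuous μ) (hμper : ∀ y, μ (y + 1) = μ y)
    (m : ℝ) (hm : 0 < m) (hμlb : ∀ y, m ≤ μ y)
    (v ξ : ℝ) (hv : v ≠ 0)
    (z : ℝ → ℝ) (hz : ContDiffOn ℝ 1 z (Set.Icc 0 1))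
    (hbc : z 1 = z 0 + Real.sign v)
    (hcontact : (∫ s in (0:ℝ)..1,
        (μ (z s) * (v * derivWithin z (Set.Icc 0 1) s) ^ 2 / 2 + ξ ^ 2 / (2 * μ (z s))))
      = ξ * v) :
    ξ = (∫ y in (0:ℝ)..1, μ y) * v := by
  set g := derivWithin z (Set.Icc 0 1) with hgdef
  set ε := Real.sign v with hεdef
  have hε : ε = 1 ∨ ε = -1 := by
    rcases lt_or_gt_of_ne hv with h | h
    · right; exact Real.sign_of_neg h
    · left; exact Real.sign_of_pos h
  have hε2 : ε * ε = 1 := by rcases hε with h | h <;> rw [h] <;> norm_num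
  have hμpos : ∀ y, 0 < μ y := fun y => hm.trans_le (hμlb y)
  have huIcc : Set.uIcc (0:ℝ) 1 = Set.Icc 0 1 := Set.uIcc_of_le zero_le_one
  have hzc : ContinuousOn z (Set.Icc 0 1) := hz.continuousOn
  have hgc : ContinuousOn g (Set.Icc 0 1) :=
    hz.continuousOn_derivWithin (uniqueDiffOn_Icc one_pos) le_rfl
  have hμz : ContinuousOn (fun s => μ (z s)) (Set.Icc 0 1) :=
    hμcont.comp_continuousOn hzc
  have hderiv : ∀ x ∈ Set.Ioo (0:ℝ) 1, HasDerivAt z (g x) x := by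
    intro x hx
    exact ((hz.differentiableOn one_ne_zero x (Set.Ioo_subset_Icc_self hx)).hasDerivWithinAt).hasDerivAt
      (Icc_mem_nhds hx.1 hx.2)
  have hgint : IntervalIntegrable g volume 0 1 :=
    (huIcc ▸ hgc).intervalIntegrable
  have hftc : (∫ s in (0:ℝ)..1, g s) = z 1 - z 0 :=
    integral_eq_sub_of_hasDeriv_right_of_le zero_le_one hzc
      (fun x hx => (hderiv x hx).hasDerivWithinAt) hgint
  -- the nonnegative excess
  set W : ℝ → ℝ := fun s => μ (z s) * (v * g s) ^ 2 / 2 + ξ ^ 2 / (2 * μ (z s)) with hWdef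
  set h : ℝ → ℝ := fun s => W s - ε * ξ * (v * g s) with hhdef
  have hkey : ∀ s, h s = (μ (z s) * (v * g s) - ε * ξ) ^ 2 / (2 * μ (z s)) := by
    intro s
    have hne : μ (z s) ≠ 0 := (hμpos (z s)).ne'
    simp only [hhdef, hWdef]
    rcases hε with h1 | h1 <;> rw [h1] <;> field_simp <;> ring
  have hWc : ContinuousOn W (Set.Icc 0 1) := by
    apply ContinuousOn.add
    · exact ((hμz.mul ((continuousOn_const.mul hgc).pow 2)).div_const 2)
    · exact continuousOn_const.div (continuousOn_const.mul hμz)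
        (fun s _ => (mul_pos two_pos (hμpos (z s))).ne')
  have hWint : IntervalIntegrable W volume 0 1 := (huIcc ▸ hWc).intervalIntegrable
  have hhc : ContinuousOn h (Set.Icc 0 1) :=
    hWc.sub (continuousOn_const.mul (continuousOn_const.mul hgc))
  have hhint : IntervalIntegrable h volume 0 1 := (huIcc ▸ hhc).intervalIntegrable
  have hhnonneg : ∀ s, 0 ≤ h s := by
    intro s
    rw [hkey s]
    exact div_nonneg (sq_nonneg _) (by linarith [hμpos (z s)])
  have hhzero : (∫ s in (0:ℝ)..1, h s) = 0 := by
    have : (∫ s in (0:ℝ)..1, h s)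
        = (∫ s in (0:ℝ)..1, W s) - ε * ξ * v * (∫ s in (0:ℝ)..1, g s) := by
      rw [← intervalIntegral.integral_const_mul]
      rw [← intervalIntegral.integral_sub hWint (hgint.const_mul _)]
      apply intervalIntegral.integral_congr
      intro s _
      simp only [hhdef]
      ring
    rw [this, hcontact, hftc, hbc]
    rcases hε with h1 | h1 <;> rw [h1] <;> ring
  -- a.e. vanishing
  have hIoc : IntegrableOn h (Set.Ioc (0:ℝ) 1) volume :=
    (intervalIntegrable_iff_integrableOn_Ioc_of_le zero_le_one).mp hhint
  have hae : h =ᵐ[volume.restrict (Set.Ioc (0:ℝ) 1)] 0 := by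
    have h0 : (∫ s in Set.Ioc (0:ℝ) 1, h s) = 0 := by
      rw [← intervalIntegral.integral_of_le zero_le_one]; exact hhzero
    exact (integral_eq_zero_iff_of_nonneg (fun s => hhnonneg s) hIoc).mp h0
  have hae' : (fun s => μ (z s) * (v * g s))
      =ᵐ[volume.restrict (Set.Ioc (0:ℝ) 1)] (fun _ => ε * ξ) := by
    filter_upwards [hae] with s hs
    have hne : (2 : ℝ) * μ (z s) ≠ 0 := (mul_pos two_pos (hμpos (z s))).ne'
    have : (μ (z s) * (v * g s) - ε * ξ) ^ 2 = 0 := by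
      have := hkey s
      rw [hs, Pi.zero_apply] at this
      exact (div_eq_zero_iff.mp this.symm).resolve_right hne
    have := pow_eq_zero_iff (n := 2) (by norm_num) |>.mp this
    linarith [sub_eq_zero.mp this]
  have hint2 : (∫ s in (0:ℝ)..1, μ (z s) * (v * g s)) = ε * ξ := by
    rw [intervalIntegral.integral_of_le zero_le_one, integral_congr_ae hae']
    simp [Real.volume_Ioc]
  -- change of variables
  have hcov : (∫ s in (0:ℝ)..1, g s • (μ ∘ z) s) = ∫ u in (z 0)..(z 1), μ u := by
    apply intervalIntegral.integral_comp_smul_deriv'' (huIcc ▸ hzc)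
    · intro x hx
      simp only [min_eq_left zero_le_one, max_eq_right zero_le_one] at hx
      exact (hderiv x hx).hasDerivWithinAt
    · exact huIcc ▸ hgc
    · exact hμcont.continuousOn
  have hμmean : (∫ u in (z 0)..(z 1), μ u) = ε * ∫ y in (0:ℝ)..1, μ y := by
    have hper : Function.Periodic μ 1 := hμper
    rcases hε with h1 | h1
    · rw [hbc, h1, hper.intervalIntegral_add_eq (z 0) 0]
      norm_num
    · rw [hbc, h1]
      rw [show z 0 + (-1:ℝ) = z 0 - 1 by ring]
      rw [intervalIntegral.integral_symm]
      have := hper.intervalIntegral_add_eq (z 0 - 1) 0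
      rw [show z 0 - 1 + 1 = z 0 by ring] at this
      rw [this]
      norm_num
  have hfinal : ε * ξ = v * (ε * ∫ y in (0:ℝ)..1, μ y) := by
    rw [← hμmean, ← hcov, ← hint2, ← intervalIntegral.integral_const_mul]
    apply intervalIntegral.integral_congr
    intro s _
    simp only [smul_eq_mul, Function.comp]
    ring
  rcases hε with h1 | h1 <;> rw [h1] at hfinal <;> linarith
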